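/- Let d ≥ 1 and let f be a function defined on the cube {−1,1}^d with values in {−1,1} that is symmetric: f(u ∘ π) = f(u) for every permutation π of Fin d and every cube point u. For 0 ≤ s ≤ d let f̄(s) denote the common value of f at cube points having exactly s coordinates equal to −1, and let r = |{s ∈ {0,…,d−1} : f̄(s) ≠ f̄(s+1)}| be the number of sign changes of f. Then for every natural number k the following are equivalent: (i) there exists a polynomial p ∈ MvPolynomial (Fin d) ℝ with totalDegree p ≤ k such that p(u)·f(u) > 0 for every cube point u; (ii) k ≥ r. (The threshold degree of a symmetric Boolean function equals its number of sign changes.) -/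

import Mathlib

def Cube {d : ℕ} (u : Fin d → ℝ) : Prop := ∀ i, u i = 1 ∨ u i = -1

open Finset MvPolynomial

/-- sign of a product of negatives -/
lemma sign_prod_neg {α : Type*} (A : Finset α) (g : α → ℝ) (h : ∀ x ∈ A, g x < 0) :
    0 < (-1 : ℝ) ^ A.card * ∏ x ∈ A, g x := by
  classical
  induction A using Finset.cons_induction with
  | empty => simp
  | cons a A ha ih =>
    have h1 : g a < 0 := h a (Finset.mem_cons_self _ _)
    have h2 := ih (fun x hx => h x (Finset.mem_cons_of_mem hx))
    rw [Finset.prod_cons, Finset.card_cons, pow_succ]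
    nlinarith

section perval
variable {d : ℕ} (fbar : ℕ → ℝ)

/-- canonical cube point from a subset -/
def chi (T : Finset (Fin d)) : Fin d → ℝ := fun i => if i ∈ T then -1 else 1

lemma chi_cube (T : Finset (Fin d)) : Cube (chi T) := by
  intro i; unfold chi; split <;> simp

lemma chi_filter (T : Finset (Fin d)) :
    Finset.univ.filter (fun i => chi T i = -1) = T := by
  ext i
  simp only [Finset.mem_filter, Finset.mem_univ, true_and, chi]
  by_cases h : i ∈ T <;> simp [Finset.mem_filter, h] <;> norm_num

lemma chi_filter_card (T : Finset (Fin d)) :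
    (Finset.univ.filter (fun i => chi T i = -1)).card = T.card := by
  rw [chi_filter]

/-- sum of coordinates of a cube point -/
lemma cube_sum {u : Fin d → ℝ} (hu : Cube u) :
    ∑ i, u i = (d : ℝ) - 2 * (Finset.univ.filter (fun i => u i = -1)).card := by
  classical
  set A := Finset.univ.filter (fun i => u i = -1) with hA
  have hsplit := Finset.sum_filter_add_sum_filter_not Finset.univ (fun i => u i = -1) u
  have h1 : ∑ i ∈ A, u i = -(A.card : ℝ) := by
    rw [Finset.sum_congr rfl (fun i hi => (Finset.mem_filter.1 hi).2)]
    simp [mul_comm]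
    rw [hA]
  have h2 : ∑ i ∈ Finset.univ.filter (fun i => ¬ u i = -1), u i
      = ((Finset.univ.filter (fun i => ¬ u i = -1)).card : ℝ) := by
    rw [Finset.sum_congr rfl (fun i hi => ((hu i).resolve_right (Finset.mem_filter.1 hi).2))]
    simp
  have hc := Finset.card_filter_add_card_filter_not (s := (Finset.univ : Finset (Fin d)))
    (fun i => u i = -1)
  rw [Finset.card_univ, Fintype.card_fin] at hc
  rw [← hsplit, h1, h2]
  have h3 : ((Finset.univ.filter (fun i => ¬ u i = -1)).card : ℝ) = (d : ℝ) - A.card := by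
    have h4 : A.card + (Finset.univ.filter (fun i => ¬ u i = -1)).card = d := hc
    have := congrArg (fun n : ℕ => (n : ℝ)) h4
    push_cast at this
    linarith
  rw [h3]; ring

end perval

section fbarlem
variable {d : ℕ} {fbar : ℕ → ℝ}

/-- values of fbar are ±1 -/
lemma fbar_pm (hpm : ∀ u : Fin d → ℝ, Cube u → fbar ((Finset.univ.filter (fun i => u i = -1)).card) = 1 ∨ fbar ((Finset.univ.filter (fun i => u i = -1)).card) = -1)
    {n : ℕ} (hn : n ≤ d) : fbar n = 1 ∨ fbar n = -1 := by
  classical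
  obtain ⟨T, -, hT⟩ := Finset.exists_subset_card_eq (s := (Finset.univ : Finset (Fin d))) (n := n)
    (by simpa using hn)
  have := hpm (chi T) (chi_cube T)
  rwa [chi_filter_card, hT] at this

lemma fbar_flip (hpm : ∀ n ≤ d, fbar n = 1 ∨ fbar n = -1) {n : ℕ} (hn : n < d)
    (hch : fbar n ≠ fbar (n + 1)) : fbar (n + 1) = -fbar n := by
  rcases hpm n (le_of_lt hn) with h1 | h1 <;>
    rcases hpm (n + 1) hn with h2 | h2 <;> rw [h1, h2] at hch ⊢ <;> first | exact absurd rfl hch | norm_num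

/-- fbar n = fbar 0 · (−1)^(number of sign changes before n) -/
lemma fbar_eq (hpm : ∀ n ≤ d, fbar n = 1 ∨ fbar n = -1) :
    ∀ n ≤ d, fbar 0 * fbar n =
      (-1 : ℝ) ^ (((Finset.range n).filter (fun s => fbar s ≠ fbar (s + 1))).card) := by
  classical
  intro n
  induction n with
  | zero =>
    intro _
    rcases hpm 0 (Nat.zero_le d) with h | h <;> rw [h] <;> norm_num
  | succ n ih =>
    intro hn
    have hnd : n < d := hn
    have ihn := ih (le_of_lt hnd)
    rw [Finset.range_add_one, Finset.filter_insert]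
    by_cases hch : fbar n ≠ fbar (n + 1)
    · rw [if_pos hch, Finset.card_insert_of_notMem (by simp), pow_succ,
        fbar_flip hpm hnd hch]
      rw [← ihn]; ring
    · rw [if_neg hch]
      push_neg at hch
      rw [← hch, ihn]

end fbarlem

section partA
variable {d : ℕ} {fbar : ℕ → ℝ}

lemma partA (hpm : ∀ n ≤ d, fbar n = 1 ∨ fbar n = -1) (k : ℕ)
    (hk : ((Finset.range d).filter (fun s => fbar s ≠ fbar (s + 1))).card ≤ k) :
    ∃ p : MvPolynomial (Fin d) ℝ, p.totalDegree ≤ k ∧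
      ∀ u : Fin d → ℝ, Cube u →
        0 < MvPolynomial.eval u p * fbar ((Finset.univ.filter (fun i => u i = -1)).card) := by
  classical
  set chgs := (Finset.range d).filter (fun s => fbar s ≠ fbar (s + 1)) with hchgs
  -- the linear polynomial whose value at a cube point is (#minus-coordinates)
  set L : MvPolynomial (Fin d) ℝ :=
    MvPolynomial.C ((d : ℝ) / 2) - MvPolynomial.C (1 / 2) * ∑ i, MvPolynomial.X i with hL
  have hLdeg : L.totalDegree ≤ 1 := by
    refine le_trans (MvPolynomial.totalDegree_sub _ _) ?_
    refine max_le (by simp [MvPolynomial.totalDegree_C]) ?_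
    refine le_trans (MvPolynomial.totalDegree_mul _ _) ?_
    simp only [MvPolynomial.totalDegree_C, zero_add]
    refine le_trans (MvPolynomial.totalDegree_finset_sum _ _) ?_
    exact Finset.sup_le fun i _ => le_of_eq (MvPolynomial.totalDegree_X i)
  set p : MvPolynomial (Fin d) ℝ :=
    MvPolynomial.C (fbar 0) * ∏ s ∈ chgs, (MvPolynomial.C ((s : ℝ) + 1 / 2) - L) with hp
  refine ⟨p, ?_, ?_⟩
  · refine le_trans (MvPolynomial.totalDegree_mul _ _) ?_
    rw [MvPolynomial.totalDegree_C, zero_add]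
    refine le_trans (MvPolynomial.totalDegree_finset_prod _ _) ?_
    have h1 : ∀ s ∈ chgs, (MvPolynomial.C ((s : ℝ) + 1 / 2) - L).totalDegree ≤ 1 := fun s _ =>
      le_trans (MvPolynomial.totalDegree_sub _ _)
        (max_le (by rw [MvPolynomial.totalDegree_C]; exact Nat.zero_le 1) hLdeg)
    refine le_trans (Finset.sum_le_card_nsmul _ _ 1 h1) ?_
    simpa using hk
  · intro u hu
    set n := (Finset.univ.filter (fun i => u i = -1)).card with hn
    have hnd : n ≤ d := by
      rw [hn]
      calc (Finset.univ.filter (fun i => u i = -1)).card ≤ (Finset.univ : Finset (Fin d)).card :=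
            Finset.card_filter_le _ _
        _ = d := by simp
    have hevalL : MvPolynomial.eval u L = (n : ℝ) := by
      rw [hL]
      simp only [map_sub, map_mul, MvPolynomial.eval_C, map_sum, MvPolynomial.eval_X]
      rw [cube_sum hu, ← hn]
      ring
    have hevalp : MvPolynomial.eval u p =
        fbar 0 * ∏ s ∈ chgs, ((s : ℝ) + 1 / 2 - n) := by
      rw [hp]
      simp only [map_mul, MvPolynomial.eval_C, map_prod, map_sub, hevalL]
    -- sign analysis
    have hsplit : chgs.filter (fun s => s < n) = (Finset.range n).filter (fun s => fbar s ≠ fbar (s + 1)) := by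
      ext s
      simp only [hchgs, Finset.mem_filter, Finset.mem_range]
      constructor
      · rintro ⟨⟨-, h2⟩, h3⟩; exact ⟨h3, h2⟩
      · rintro ⟨h1, h2⟩; exact ⟨⟨lt_of_lt_of_le h1 hnd, h2⟩, h1⟩
    have hprodsplit := Finset.prod_filter_mul_prod_filter_not chgs (fun s => s < n)
      (fun s => (s : ℝ) + 1 / 2 - n)
    have hneg : 0 < (-1 : ℝ) ^ ((chgs.filter (fun s => s < n)).card) *
        ∏ s ∈ chgs.filter (fun s => s < n), ((s : ℝ) + 1 / 2 - n) := by
      refine sign_prod_neg _ _ fun s hs => ?_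
      have hsn : s < n := (Finset.mem_filter.1 hs).2
      have : (s : ℝ) + 1 ≤ n := by exact_mod_cast hsn
      linarith
    have hpos : 0 < ∏ s ∈ chgs.filter (fun s => ¬ s < n), ((s : ℝ) + 1 / 2 - n) := by
      refine Finset.prod_pos fun s hs => ?_
      have hsn : n ≤ s := not_lt.1 (Finset.mem_filter.1 hs).2
      have : (n : ℝ) ≤ s := by exact_mod_cast hsn
      linarith
    have hfb := fbar_eq hpm n hnd
    rw [hevalp]
    have hrw : fbar 0 * (∏ s ∈ chgs, ((s : ℝ) + 1 / 2 - n)) * fbar n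
        = (fbar 0 * fbar n) * (∏ s ∈ chgs, ((s : ℝ) + 1 / 2 - n)) := by ring
    rw [hrw, hfb, ← hprodsplit, ← hsplit]
    have := mul_pos hneg hpos
    calc (0:ℝ) < ((-1 : ℝ) ^ ((chgs.filter (fun s => s < n)).card) *
          ∏ s ∈ chgs.filter (fun s => s < n), ((s : ℝ) + 1 / 2 - n)) *
          ∏ s ∈ chgs.filter (fun s => ¬ s < n), ((s : ℝ) + 1 / 2 - n) := this
      _ = (-1 : ℝ) ^ ((chgs.filter (fun s => s < n)).card) *
          ((∏ s ∈ chgs.filter (fun s => s < n), ((s : ℝ) + 1 / 2 - n)) *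
          ∏ s ∈ chgs.filter (fun s => ¬ s < n), ((s : ℝ) + 1 / 2 - n)) := by ring

end partA

lemma choose_swap (n a b : ℕ) :
    n.choose a * (n - a).choose b = n.choose b * (n - b).choose a := by
  by_cases hab : a + b ≤ n
  · have ha : a ≤ n := by omega
    have hb : b ≤ n := by omega
    have h1 := Nat.choose_mul (n := n) (Nat.le_add_right a b)
    have h2 := Nat.choose_mul (n := n) (Nat.le_add_left b a)
    rw [Nat.add_sub_cancel_left] at h1
    rw [Nat.add_sub_cancel] at h2
    have h3 : (a + b).choose a = (a + b).choose b := by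
      rw [← Nat.choose_symm (Nat.le_add_right a b), Nat.add_sub_cancel_left]
    rw [← h1, ← h2, h3]
  · rcases le_or_gt a n with ha | ha
    · rcases le_or_gt b n with hb | hb
      · rw [Nat.choose_eq_zero_of_lt (show n - a < b by omega),
          Nat.choose_eq_zero_of_lt (show n - b < a by omega), mul_zero, mul_zero]
      · rw [Nat.choose_eq_zero_of_lt hb, Nat.choose_eq_zero_of_lt (show n - a < b by omega),
          mul_zero, zero_mul]
    · rw [Nat.choose_eq_zero_of_lt ha, Nat.choose_eq_zero_of_lt (show n - b < a by omega),
        zero_mul, mul_zero]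

lemma choose_id {d j s i : ℕ} (hj : j ≤ d) (hs : s ≤ d) (hi : i ≤ j) (his : i ≤ s) :
    d.choose j * (j.choose i * (d - j).choose (s - i)) =
      d.choose s * (s.choose i * (d - s).choose (j - i)) := by
  have h1 := Nat.choose_mul (n := d) hi
  have h2 := Nat.choose_mul (n := d) his
  have h3 := choose_swap (d - i) (j - i) (s - i)
  have e1 : d - i - (j - i) = d - j := by omega
  have e2 : d - i - (s - i) = d - s := by omega
  rw [e1, e2] at h3
  calc d.choose j * (j.choose i * (d - j).choose (s - i))
      = (d.choose j * j.choose i) * (d - j).choose (s - i) := by ring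
    _ = (d.choose i * (d - i).choose (j - i)) * (d - j).choose (s - i) := by rw [h1]
    _ = d.choose i * ((d - i).choose (j - i) * (d - j).choose (s - i)) := by ring
    _ = d.choose i * ((d - i).choose (s - i) * (d - s).choose (j - i)) := by rw [h3]
    _ = (d.choose i * (d - i).choose (s - i)) * (d - s).choose (j - i) := by ring
    _ = (d.choose s * s.choose i) * (d - s).choose (j - i) := by rw [h2]
    _ = _ := by ring

lemma fiber_card {d : ℕ} (S : Finset (Fin d)) (s i : ℕ) :
    (((Finset.univ : Finset (Fin d)).powersetCard s).filter
      (fun T => (T ∩ S).card = i)).card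
    = if i ≤ s then S.card.choose i * (Sᶜ.card).choose (s - i) else 0 := by
  classical
  split_ifs with his
  · rw [← Finset.card_powersetCard, ← Finset.card_powersetCard, ← Finset.card_product]
    apply Finset.card_bij' (fun T _ => (T ∩ S, T \ S)) (fun A _ => A.1 ∪ A.2)
    · intro T hT
      simp only [Finset.mem_filter, Finset.mem_powersetCard] at hT
      obtain ⟨⟨hsub, hcard⟩, hint⟩ := hT
      have hds : (T ∩ S).card + (T \ S).card = T.card := Finset.card_inter_add_card_sdiff T S
      simp only [Finset.mem_product, Finset.mem_powersetCard]
      refine ⟨⟨Finset.inter_subset_right, hint⟩, ?_, ?_⟩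
      · intro x hx
        simp only [Finset.mem_sdiff] at hx
        simp [hx.2]
      · omega
    · intro A hA
      simp only [Finset.mem_product, Finset.mem_powersetCard] at hA
      obtain ⟨⟨h1, h2⟩, h3, h4⟩ := hA
      have hdisj : Disjoint A.1 A.2 := by
        refine Finset.disjoint_left.2 fun x hx1 hx2 => ?_
        have := h3 hx2
        simp only [Finset.mem_compl] at this
        exact this (h1 hx1)
      have hAS : (A.1 ∪ A.2) ∩ S = A.1 := by
        rw [Finset.union_inter_distrib_right, Finset.inter_eq_left.2 h1]
        have : A.2 ∩ S = ∅ := by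
          refine Finset.eq_empty_of_forall_notMem fun x hx => ?_
          rcases Finset.mem_inter.1 hx with ⟨hx2, hxS⟩
          have := h3 hx2
          simp only [Finset.mem_compl] at this
          exact this hxS
        rw [this, Finset.union_empty]
      simp only [Finset.mem_filter, Finset.mem_powersetCard]
      refine ⟨⟨Finset.subset_univ _, ?_⟩, by rw [hAS, h2]⟩
      rw [Finset.card_union_of_disjoint hdisj, h2, h4]
      omega
    · intro T hT
      simp only [Finset.mem_filter, Finset.mem_powersetCard] at hT
      ext x; simp only [Finset.mem_union, Finset.mem_inter, Finset.mem_sdiff]; tauto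
    · intro A hA
      simp only [Finset.mem_product, Finset.mem_powersetCard] at hA
      obtain ⟨⟨h1, h2⟩, h3, h4⟩ := hA
      have hAS : (A.1 ∪ A.2) ∩ S = A.1 := by
        rw [Finset.union_inter_distrib_right, Finset.inter_eq_left.2 h1]
        have : A.2 ∩ S = ∅ := by
          refine Finset.eq_empty_of_forall_notMem fun x hx => ?_
          rcases Finset.mem_inter.1 hx with ⟨hx2, hxS⟩
          have := h3 hx2
          simp only [Finset.mem_compl] at this
          exact this hxS
        rw [this, Finset.union_empty]
      have hAS2 : (A.1 ∪ A.2) \ S = A.2 := by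
        rw [Finset.union_sdiff_distrib]
        have e1 : A.1 \ S = ∅ := Finset.sdiff_eq_empty_iff_subset.2 h1
        have e2 : A.2 \ S = A.2 := by
          rw [Finset.sdiff_eq_self_iff_disjoint]
          refine Finset.disjoint_left.2 fun x hx2 hxS => ?_
          have := h3 hx2
          simp only [Finset.mem_compl] at this
          exact this hxS
        rw [e1, e2, Finset.empty_union]
      rw [hAS, hAS2]
  · push_neg at his
    rw [Finset.card_eq_zero]
    refine Finset.filter_eq_empty_iff.2 fun T hT => ?_
    rw [Finset.mem_powersetCard] at hT
    intro h
    have : (T ∩ S).card ≤ T.card := Finset.card_le_card Finset.inter_subset_left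
    omega

open Polynomial in
/-- scaled falling-factorial binomial polynomial: evaluates to `choose x i` at naturals -/
noncomputable def binl (i : ℕ) : Polynomial ℝ := (i.factorial : ℝ)⁻¹ • descPochhammer ℝ i

open Polynomial in
noncomputable def binu (d m : ℕ) : Polynomial ℝ :=
  (m.factorial : ℝ)⁻¹ • ((descPochhammer ℝ m).comp (Polynomial.C (d : ℝ) - Polynomial.X))

lemma binl_eval (i s : ℕ) : (binl i).eval (s : ℝ) = (s.choose i : ℝ) := by
  rw [binl, Polynomial.eval_smul, smul_eq_mul, descPochhammer_eval_eq_descFactorial,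
    Nat.descFactorial_eq_factorial_mul_choose]
  push_cast
  rw [← mul_assoc, inv_mul_cancel₀ (by exact_mod_cast Nat.factorial_ne_zero i), one_mul]

lemma binu_eval (d m s : ℕ) (hs : s ≤ d) : (binu d m).eval (s : ℝ) = ((d - s).choose m : ℝ) := by
  rw [binu, Polynomial.eval_smul, smul_eq_mul, Polynomial.eval_comp]
  have : (Polynomial.C (d:ℝ) - Polynomial.X).eval (s : ℝ) = ((d - s : ℕ) : ℝ) := by
    rw [Polynomial.eval_sub, Polynomial.eval_C, Polynomial.eval_X, Nat.cast_sub hs]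
  rw [this, descPochhammer_eval_eq_descFactorial, Nat.descFactorial_eq_factorial_mul_choose]
  push_cast
  rw [← mul_assoc, inv_mul_cancel₀ (by exact_mod_cast Nat.factorial_ne_zero m), one_mul]

lemma binl_natDegree (i : ℕ) : (binl i).natDegree ≤ i := by
  refine le_trans (Polynomial.natDegree_smul_le _ _) ?_
  rw [descPochhammer_natDegree]

lemma binu_natDegree (d m : ℕ) : (binu d m).natDegree ≤ m := by
  refine le_trans (Polynomial.natDegree_smul_le _ _) ?_
  refine le_trans (Polynomial.natDegree_comp_le) ?_
  rw [descPochhammer_natDegree]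
  have : (Polynomial.C (d:ℝ) - Polynomial.X).natDegree ≤ 1 := by
    refine le_trans (Polynomial.natDegree_sub_le _ _) ?_
    simp [Polynomial.natDegree_X]
  calc m * (Polynomial.C (d:ℝ) - Polynomial.X).natDegree ≤ m * 1 := Nat.mul_le_mul_left m this
    _ = m := Nat.mul_one m

/-- the (normalized) Krawtchouk polynomial -/
noncomputable def KR (d j : ℕ) : Polynomial ℝ :=
  ∑ i ∈ Finset.range (j + 1), ((-1 : ℝ) ^ i) • (binl i * binu d (j - i))

lemma KR_natDegree (d j : ℕ) : (KR d j).natDegree ≤ j := by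
  refine le_trans (Polynomial.natDegree_sum_le _ _) ?_
  refine (Finset.fold_max_le _).mpr ⟨Nat.zero_le _, fun i hi => ?_⟩
  simp only [Function.comp_apply]
  refine le_trans (Polynomial.natDegree_smul_le _ _) ?_
  refine le_trans (Polynomial.natDegree_mul_le) ?_
  have := binl_natDegree i
  have := binu_natDegree d (j - i)
  have : i ≤ j := by
    have := Finset.mem_range.1 hi; omega
  omega

lemma KR_eval (d j s : ℕ) (hs : s ≤ d) :
    (KR d j).eval (s : ℝ)
      = ∑ i ∈ Finset.range (j + 1), (-1 : ℝ) ^ i * (s.choose i : ℝ) * ((d - s).choose (j - i) : ℝ) := by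
  rw [KR, Polynomial.eval_finset_sum]
  refine Finset.sum_congr rfl fun i _ => ?_
  rw [Polynomial.eval_smul, Polynomial.eval_mul, binl_eval, binu_eval d _ s hs, smul_eq_mul,
    mul_assoc]

lemma key_sum {d : ℕ} (S : Finset (Fin d)) {s : ℕ} (hs : s ≤ d) :
    (d.choose S.card : ℝ) *
      ∑ T ∈ (Finset.univ : Finset (Fin d)).powersetCard s, (-1 : ℝ) ^ ((T ∩ S).card)
    = (d.choose s : ℝ) * (KR d S.card).eval (s : ℝ) := by
  classical
  set j := S.card with hjdef
  have hj : j ≤ d := by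
    rw [hjdef]
    calc S.card ≤ (Finset.univ : Finset (Fin d)).card := Finset.card_le_card (Finset.subset_univ S)
      _ = d := by simp
  have hcompl : (Sᶜ : Finset (Fin d)).card = d - j := by
    rw [Finset.card_compl]; simp [hjdef]
  have hmaps : ∀ T ∈ (Finset.univ : Finset (Fin d)).powersetCard s,
      (T ∩ S).card ∈ Finset.range (j + 1) := by
    intro T _
    rw [Finset.mem_range]
    have : (T ∩ S).card ≤ S.card := Finset.card_le_card Finset.inter_subset_right
    omega
  rw [← Finset.sum_fiberwise_of_maps_to hmaps (fun T => (-1 : ℝ) ^ ((T ∩ S).card))]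
  rw [KR_eval d j s hs, Finset.mul_sum, Finset.mul_sum]
  refine Finset.sum_congr rfl fun i hi => ?_
  have hinner : ∑ T ∈ ((Finset.univ : Finset (Fin d)).powersetCard s).filter
      (fun T => (T ∩ S).card = i), (-1 : ℝ) ^ ((T ∩ S).card)
      = ((((Finset.univ : Finset (Fin d)).powersetCard s).filter
          (fun T => (T ∩ S).card = i)).card : ℝ) * (-1 : ℝ) ^ i := by
    rw [Finset.sum_congr rfl (fun T hT => by
      rw [(Finset.mem_filter.1 hT).2]), Finset.sum_const, nsmul_eq_mul]
  rw [hinner, fiber_card]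
  have hij : i ≤ j := by have := Finset.mem_range.1 hi; omega
  by_cases his : i ≤ s
  · rw [if_pos his, ← hjdef, hcompl]
    have := choose_id hj hs hij his
    have hcast : (d.choose j : ℝ) * (j.choose i * (d - j).choose (s - i) : ℕ)
        = (d.choose s : ℝ) * ((s.choose i : ℕ) * ((d - s).choose (j - i) : ℕ)) := by
      exact_mod_cast congrArg (fun n : ℕ => (n : ℝ)) this
    push_cast at hcast ⊢
    calc (d.choose j : ℝ) * ((j.choose i : ℝ) * ((d - j).choose (s - i) : ℝ) * (-1) ^ i)
        = ((d.choose j : ℝ) * ((j.choose i : ℝ) * ((d - j).choose (s - i) : ℝ))) * (-1) ^ i := by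
          ring
      _ = ((d.choose s : ℝ) * ((s.choose i : ℝ) * ((d - s).choose (j - i) : ℝ))) * (-1) ^ i := by
          rw [hcast]
      _ = _ := by ring
  · rw [if_neg his, Nat.choose_eq_zero_of_lt (by omega : s < i)]
    push_cast
    ring

section evalchi
variable {d : ℕ}

/-- odd part of the exponent multiset of a monomial -/
def OS (m : Fin d →₀ ℕ) : Finset (Fin d) := m.support.filter (fun i => Odd (m i))

lemma OS_subset (m : Fin d →₀ ℕ) : OS m ⊆ m.support := Finset.filter_subset _ _

lemma mem_OS {m : Fin d →₀ ℕ} {i : Fin d} : i ∈ OS m ↔ i ∈ m.support ∧ Odd (m i) :=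
  Finset.mem_filter

lemma eval_chi (p : MvPolynomial (Fin d) ℝ) (T : Finset (Fin d)) :
    MvPolynomial.eval (chi T) p
      = ∑ m ∈ p.support, p.coeff m * (-1 : ℝ) ^ ((T ∩ OS m).card) := by
  classical
  rw [MvPolynomial.eval_eq]
  refine Finset.sum_congr rfl fun m hm => ?_
  congr 1
  have hterm : ∀ i ∈ m.support, chi T i ^ m i = if i ∈ T ∩ OS m then (-1 : ℝ) else 1 := by
    intro i hi
    unfold chi
    by_cases hiT : i ∈ T
    · rw [if_pos hiT]
      by_cases ho : Odd (m i)
      · rw [ho.neg_one_pow, if_pos (Finset.mem_inter.2 ⟨hiT, mem_OS.2 ⟨hi, ho⟩⟩)]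
      · have he : Even (m i) := Nat.not_odd_iff_even.1 ho
        rw [he.neg_one_pow, if_neg]
        intro hmem
        exact ho (mem_OS.1 (Finset.mem_inter.1 hmem).2).2
    · rw [if_neg hiT, one_pow, if_neg]
      intro hmem
      exact hiT (Finset.mem_inter.1 hmem).1
  rw [Finset.prod_congr rfl hterm, Finset.prod_ite_mem]
  have hsub : m.support ∩ (T ∩ OS m) = T ∩ OS m := by
    refine Finset.inter_eq_right.2 fun x hx => OS_subset m (Finset.mem_inter.1 hx).2
  rw [hsub, Finset.prod_const]

/-- the symmetrized univariate polynomial -/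
noncomputable def Qpoly (p : MvPolynomial (Fin d) ℝ) : Polynomial ℝ :=
  ∑ m ∈ p.support, (p.coeff m * ((d.choose ((OS m).card) : ℝ))⁻¹) • KR d ((OS m).card)

lemma OS_card_le {p : MvPolynomial (Fin d) ℝ} {m : Fin d →₀ ℕ} (hm : m ∈ p.support) :
    (OS m).card ≤ p.totalDegree := by
  classical
  have h1 : (OS m).card • 1 ≤ ∑ i ∈ OS m, m i := by
    refine Finset.card_nsmul_le_sum _ _ _ fun i hi => ?_
    have ho := (mem_OS.1 hi).2
    rcases ho with ⟨c, hc⟩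
    omega
  have h2 : ∑ i ∈ OS m, m i ≤ ∑ i ∈ m.support, m i :=
    Finset.sum_le_sum_of_subset (OS_subset m)
  have h3 : (m.sum fun _ e => e) ≤ p.totalDegree := MvPolynomial.le_totalDegree hm
  rw [Finsupp.sum] at h3
  simp only [smul_eq_mul, mul_one] at h1
  omega

lemma Qpoly_natDegree (p : MvPolynomial (Fin d) ℝ) : (Qpoly p).natDegree ≤ p.totalDegree := by
  refine le_trans (Polynomial.natDegree_sum_le _ _) ?_
  refine (Finset.fold_max_le _).mpr ⟨Nat.zero_le _, fun m hm => ?_⟩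
  simp only [Function.comp_apply]
  exact le_trans (Polynomial.natDegree_smul_le _ _)
    (le_trans (KR_natDegree d _) (OS_card_le hm))

lemma OS_card_le_d (m : Fin d →₀ ℕ) : (OS m).card ≤ d := by
  calc (OS m).card ≤ (Finset.univ : Finset (Fin d)).card :=
        Finset.card_le_card (Finset.subset_univ _)
    _ = d := by simp

lemma sum_eval_chi (p : MvPolynomial (Fin d) ℝ) {s : ℕ} (hs : s ≤ d) :
    ∑ T ∈ (Finset.univ : Finset (Fin d)).powersetCard s, MvPolynomial.eval (chi T) p
      = (d.choose s : ℝ) * (Qpoly p).eval (s : ℝ) := by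
  classical
  have h1 : ∑ T ∈ (Finset.univ : Finset (Fin d)).powersetCard s, MvPolynomial.eval (chi T) p
      = ∑ m ∈ p.support, p.coeff m *
          ∑ T ∈ (Finset.univ : Finset (Fin d)).powersetCard s, (-1 : ℝ) ^ ((T ∩ OS m).card) := by
    rw [Finset.sum_congr rfl fun T _ => eval_chi p T, Finset.sum_comm]
    exact Finset.sum_congr rfl fun m _ => by rw [Finset.mul_sum]
  rw [h1, Qpoly, Polynomial.eval_finset_sum, Finset.mul_sum]
  refine Finset.sum_congr rfl fun m hm => ?_
  have hjd : (OS m).card ≤ d := OS_card_le_d m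
  have hkey := key_sum (OS m) hs
  have hcpos : (0 : ℝ) < (d.choose (OS m).card : ℝ) := by
    exact_mod_cast Nat.choose_pos hjd
  have hsumT : ∑ T ∈ (Finset.univ : Finset (Fin d)).powersetCard s, (-1 : ℝ) ^ ((T ∩ OS m).card)
      = (d.choose (OS m).card : ℝ)⁻¹ * ((d.choose s : ℝ) * (KR d (OS m).card).eval (s : ℝ)) := by
    rw [← hkey, ← mul_assoc, inv_mul_cancel₀ (ne_of_gt hcpos), one_mul]
  rw [hsumT, Polynomial.eval_smul, smul_eq_mul]
  ring

end evalchi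

section partB
variable {d : ℕ} {fbar : ℕ → ℝ}

lemma partB (hpm : ∀ n ≤ d, fbar n = 1 ∨ fbar n = -1) (k : ℕ)
    (p : MvPolynomial (Fin d) ℝ) (hdeg : p.totalDegree ≤ k)
    (hsgn : ∀ u : Fin d → ℝ, Cube u →
      0 < MvPolynomial.eval u p * fbar ((Finset.univ.filter (fun i => u i = -1)).card)) :
    ((Finset.range d).filter (fun s => fbar s ≠ fbar (s + 1))).card ≤ k := by
  classical
  set Q := Qpoly p with hQ
  have hQdeg : Q.natDegree ≤ k := le_trans (Qpoly_natDegree p) hdeg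
  -- Q sign-represents fbar on 0..d
  have hQs : ∀ s : ℕ, s ≤ d → 0 < Q.eval (s : ℝ) * fbar s := by
    intro s hs
    have hne : ((Finset.univ : Finset (Fin d)).powersetCard s).Nonempty :=
      Finset.powersetCard_nonempty.2 (by simp [hs])
    have hpos : 0 < ∑ T ∈ (Finset.univ : Finset (Fin d)).powersetCard s,
        MvPolynomial.eval (chi T) p * fbar s := by
      refine Finset.sum_pos (fun T hT => ?_) hne
      have hTcard : T.card = s := (Finset.mem_powersetCard.1 hT).2
      have := hsgn (chi T) (chi_cube T)
      rwa [chi_filter_card, hTcard] at this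
    rw [← Finset.sum_mul, sum_eval_chi p hs] at hpos
    have hcpos : (0 : ℝ) < (d.choose s : ℝ) := by exact_mod_cast Nat.choose_pos hs
    have h2 : 0 < (d.choose s : ℝ)⁻¹ * ((d.choose s : ℝ) * Polynomial.eval (s:ℝ) Q * fbar s) :=
      mul_pos (inv_pos.2 hcpos) hpos
    calc (0:ℝ) < (d.choose s : ℝ)⁻¹ * ((d.choose s : ℝ) * Polynomial.eval (s:ℝ) Q * fbar s) := h2
      _ = ((d.choose s : ℝ)⁻¹ * (d.choose s : ℝ)) * (Polynomial.eval (s:ℝ) Q * fbar s) := by ring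
      _ = Polynomial.eval (s:ℝ) Q * fbar s := by
          rw [inv_mul_cancel₀ (ne_of_gt hcpos), one_mul]
  have hQ0 : Q ≠ 0 := by
    intro h
    have := hQs 0 (Nat.zero_le d)
    rw [h] at this
    simp at this
  -- each sign change yields a root in the open interval
  have hroot : ∀ s ∈ (Finset.range d).filter (fun s => fbar s ≠ fbar (s + 1)),
      ∃ x, x ∈ Set.Ioo ((s : ℝ)) ((s : ℝ) + 1) ∧ Polynomial.eval x Q = 0 := by
    intro s hs
    rw [Finset.mem_filter, Finset.mem_range] at hs
    obtain ⟨hsd, hch⟩ := hs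
    have h1 := hQs s (le_of_lt hsd)
    have h2 := hQs (s + 1) hsd
    have hflip := fbar_flip hpm hsd hch
    have hcast : ((s + 1 : ℕ) : ℝ) = (s : ℝ) + 1 := by push_cast; ring
    have hcont : ContinuousOn (fun x => Polynomial.eval x Q)
        (Set.Icc ((s : ℝ)) ((s : ℝ) + 1)) := (Q.continuous).continuousOn
    have hle : ((s : ℝ)) ≤ (s : ℝ) + 1 := by linarith
    rcases hpm s (le_of_lt hsd) with hpm1 | hpm1
    · -- fbar s = 1 : Q.eval s > 0 > Q.eval (s+1)
      rw [hpm1, mul_one] at h1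
      rw [hflip, hpm1, hcast] at h2
      have h2' : Polynomial.eval ((s : ℝ) + 1) Q < 0 := by nlinarith
      have h0 : (0 : ℝ) ∈ Set.Ioo (Polynomial.eval ((s : ℝ) + 1) Q)
          (Polynomial.eval ((s : ℝ)) Q) := ⟨h2', h1⟩
      obtain ⟨x, hx1, hx2⟩ := intermediate_value_Ioo' hle hcont h0
      exact ⟨x, hx1, hx2⟩
    · rw [hpm1] at h1
      have h1' : Polynomial.eval ((s : ℝ)) Q < 0 := by nlinarith
      rw [hflip, hpm1, hcast] at h2
      have h2' : 0 < Polynomial.eval ((s : ℝ) + 1) Q := by nlinarith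
      have h0 : (0 : ℝ) ∈ Set.Ioo (Polynomial.eval ((s : ℝ)) Q)
          (Polynomial.eval ((s : ℝ) + 1) Q) := ⟨h1', h2'⟩
      obtain ⟨x, hx1, hx2⟩ := intermediate_value_Ioo hle hcont h0
      exact ⟨x, hx1, hx2⟩
  -- pick one root per sign change; they are distinct
  set chgs := (Finset.range d).filter (fun s => fbar s ≠ fbar (s + 1)) with hchgs
  have hex : ∀ s : ℕ, ∃ x : ℝ, s ∈ chgs → x ∈ Set.Ioo ((s : ℝ)) ((s : ℝ) + 1) ∧
      Polynomial.eval x Q = 0 := by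
    intro s
    by_cases h : s ∈ chgs
    · obtain ⟨x, hx⟩ := hroot s h
      exact ⟨x, fun _ => hx⟩
    · exact ⟨0, fun hc => absurd hc h⟩
  choose g hg using hex
  have hmaps : ∀ s ∈ chgs, g s ∈ Q.roots.toFinset := by
    intro s hs
    rw [Multiset.mem_toFinset, Polynomial.mem_roots hQ0]
    exact (hg s hs).2
  have hinj : Set.InjOn g ↑chgs := by
    intro a ha b hb hab
    by_contra hne
    rcases Nat.lt_or_ge a b with hlt | hge
    · have h1 := (hg a (by exact_mod_cast ha)).1
      have h2 := (hg b (by exact_mod_cast hb)).1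
      have : (a : ℝ) + 1 ≤ (b : ℝ) := by exact_mod_cast hlt
      rw [hab] at h1
      exact absurd (lt_of_lt_of_le h1.2 this) (not_lt.2 (le_of_lt h2.1))
    · have hlt : b < a := lt_of_le_of_ne hge (Ne.symm hne)
      have h1 := (hg a (by exact_mod_cast ha)).1
      have h2 := (hg b (by exact_mod_cast hb)).1
      have : (b : ℝ) + 1 ≤ (a : ℝ) := by exact_mod_cast hlt
      rw [hab] at h1
      exact absurd (lt_of_lt_of_le h2.2 this) (not_lt.2 (le_of_lt h1.1))
  calc chgs.card ≤ Q.roots.toFinset.card := Finset.card_le_card_of_injOn g hmaps hinj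
    _ ≤ Multiset.card Q.roots := Multiset.toFinset_card_le _
    _ ≤ Q.natDegree := Polynomial.card_roots' Q
    _ ≤ k := hQdeg

end partB

/-- The threshold degree of a symmetric Boolean function on `{−1,1}^d` equals its number
of sign changes: a polynomial of degree `≤ k` sign-representing `f` exists iff `k ≥ r`,
where `r` is the number of `s < d` with `f̄(s) ≠ f̄(s+1)`. -/
theorem thrdeg_symmetric_eq_sign_changes {d : ℕ} (hd : 1 ≤ d)
    (f : (Fin d → ℝ) → ℝ)
    (hsym : ∀ π : Equiv.Perm (Fin d), ∀ u : Fin d → ℝ, Cube u → f (u ∘ π) = f u)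
    (hval : ∀ u : Fin d → ℝ, Cube u → f u = 1 ∨ f u = -1)
    (fbar : ℕ → ℝ)
    (hbar : ∀ u : Fin d → ℝ, Cube u →
      f u = fbar (Finset.univ.filter (fun i => u i = -1)).card) :
    ∀ k : ℕ,
      (∃ p : MvPolynomial (Fin d) ℝ, p.totalDegree ≤ k ∧
          ∀ u : Fin d → ℝ, Cube u → 0 < MvPolynomial.eval u p * f u) ↔
        ((Finset.range d).filter (fun s => fbar s ≠ fbar (s + 1))).card ≤ k := by
  have hpm : ∀ n ≤ d, fbar n = 1 ∨ fbar n = -1 := by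
    refine fun n hn => fbar_pm (fun u hu => ?_) hn
    rw [← hbar u hu]
    exact hval u hu
  intro k
  constructor
  · rintro ⟨p, hdeg, hsgn⟩
    refine partB hpm k p hdeg fun u hu => ?_
    rw [← hbar u hu]
    exact hsgn u hu
  · intro hk
    obtain ⟨p, hdeg, hsgn⟩ := partA hpm k hk
    refine ⟨p, hdeg, fun u hu => ?_⟩
    rw [hbar u hu]
    exact hsgn u hu
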